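/- With f μ_f-strongly convex, g μ_g-strongly convex, iterates produced by updates satisfying the primal and dual proximal optimality conditions of LDPD with ŷ_t = (y_t − y_{t−1})α_t + y_t, the gap E_t = L(x̄_t, y) − L(x, ȳ_t) satisfies: [E_{t+1} − (1−θ_t)E_t]/θ_t ≤ ⟨x − x_{t+1}, x_{t+1} − x_t⟩/η_t + (L_f θ_t/2)‖x_{t+1} − x_t‖² − (μ_f θ_t/2)‖x − x_t‖² + ⟨y − y_{t+1}, y_{t+1} − y_t⟩/τ_t − (μ_g/2)‖y − y_{t+1}‖² + ⟨Ax − Ax_{t+1}, y_t − y_{t+1}⟩ − α_t⟨Ax − Ax_t, y_{t−1} − y_t⟩ + α_t⟨Ax_t − Ax_{t+1}, y_t − y_{t−1}⟩. -/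

import Mathlib

set_option maxHeartbeats 1000000


open scoped RealInnerProductSpace

theorem stmt11 {E F : Type*} [NormedAddCommGroup E] [InnerProductSpace ℝ E] [CompleteSpace E]
    [NormedAddCommGroup F] [InnerProductSpace ℝ F] [CompleteSpace F]
    (f : E → ℝ) (f' : E → E) (g : F → ℝ) (A : E →L[ℝ] F)
    (Lf μf μg : ℝ) (hμf : 0 ≤ μf) (hμg : 0 ≤ μg)
    (hsmooth : ∀ u v, f u ≤ f v + ⟪f' v, u - v⟫ + Lf / 2 * ‖u - v‖ ^ 2)
    (hfsc : ∀ z w, f w + ⟪f' w, z - w⟫ + μf / 2 * ‖z - w‖ ^ 2 ≤ f z)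
    (hg : StrongConvexOn Set.univ μg g)
    (θ η τ α : ℝ) (hθ0 : 0 < θ) (hθ1 : θ ≤ 1) (hη : 0 < η) (hτ : 0 < τ) (hα : 0 ≤ α)
    (xb xb' x0 x1 xh : E) (yb yb' ym1 y0 y1 yh : F)
    (hxh : xh = (1 - θ) • xb + θ • x0)
    (hyh : yh = α • (y0 - ym1) + y0)
    (hx : x1 = x0 - η • (f' xh + (ContinuousLinearMap.adjoint A) yh))
    (hxb' : xb' = (1 - θ) • xb + θ • x1)
    (hy : ∀ z, ‖y1 - (y0 + τ • A x1)‖ ^ 2 / (2 * τ) + g y1 ≤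
      ‖z - (y0 + τ • A x1)‖ ^ 2 / (2 * τ) + g z)
    (hyb' : yb' = (1 - θ) • yb + θ • y1)
    (L : E → F → ℝ) (hL : ∀ u v, L u v = f u + ⟪A u, v⟫ - g v)
    (x : E) (y : F)
    (E0 E1 : ℝ) (hE0 : E0 = L xb y - L x yb) (hE1 : E1 = L xb' y - L x yb') :
    (E1 - (1 - θ) * E0) / θ ≤
      ⟪x - x1, x1 - x0⟫ / η + Lf * θ / 2 * ‖x1 - x0‖ ^ 2
      - μf * θ / 2 * ‖x - x0‖ ^ 2
      + ⟪y - y1, y1 - y0⟫ / τ - μg / 2 * ‖y - y1‖ ^ 2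
      + ⟪A x - A x1, y0 - y1⟫ - α * ⟪A x - A x0, ym1 - y0⟫
      + α * ⟪A x0 - A x1, y0 - ym1⟫ := by
  have hθ2 : (0:ℝ) ≤ 1 - θ := by linarith
  -- vector identities
  have v1 : xb' - xh = θ • (x1 - x0) := by rw [hxb', hxh]; module
  have v2 : ((1 - θ) • xb + θ • x) - xh = θ • (x - x0) := by rw [hxh]; module
  -- smoothness step
  have hA : f xb' ≤ f xh + θ * ⟪f' xh, x1 - x0⟫ + Lf / 2 * (θ ^ 2 * ‖x1 - x0‖ ^ 2) := by
    have h := hsmooth xb' xh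
    rw [v1, real_inner_smul_right, norm_smul, Real.norm_eq_abs, mul_pow, sq_abs] at h
    linarith
  -- strong convexity step
  have hB : f xh ≤ (1 - θ) * f xb + θ * f x - θ * ⟪f' xh, x - x0⟫
      - μf / 2 * (θ ^ 2 * ‖x - x0‖ ^ 2) := by
    set xt := (1 - θ) • xb + θ • x with hxt
    have h1' := mul_le_mul_of_nonneg_left (hfsc xb xt) hθ2
    have h2' := mul_le_mul_of_nonneg_left (hfsc x xt) hθ0.le
    have hz : (1 - θ) * ⟪f' xt, xb - xt⟫ + θ * ⟪f' xt, x - xt⟫ = 0 := by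
      rw [← real_inner_smul_right, ← real_inner_smul_right, ← inner_add_right]
      have hv : (1 - θ) • (xb - xt) + θ • (x - xt) = 0 := by rw [hxt]; module
      rw [hv, inner_zero_right]
    have hp1 : 0 ≤ (1 - θ) * (μf / 2 * ‖xb - xt‖ ^ 2) := by positivity
    have hp2 : 0 ≤ θ * (μf / 2 * ‖x - xt‖ ^ 2) := by positivity
    have hB1 : f xt ≤ (1 - θ) * f xb + θ * f x := by nlinarith [h1', h2', hz, hp1, hp2]
    have h3 := hfsc xt xh
    rw [v2, real_inner_smul_right, norm_smul, Real.norm_eq_abs, mul_pow, sq_abs] at h3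
    linarith
  -- gradient identity
  have hgrad : f' xh = η⁻¹ • (x0 - x1) - (ContinuousLinearMap.adjoint A) yh := by
    have h : η • (f' xh + (ContinuousLinearMap.adjoint A) yh) = x0 - x1 := by
      rw [hx]; module
    have h2 : f' xh + (ContinuousLinearMap.adjoint A) yh = η⁻¹ • (x0 - x1) := by
      rw [← h, smul_smul, inv_mul_cancel₀ hη.ne', one_smul]
    rw [← h2]; abel
  -- key inner product identity
  have ic1 : ⟪f' xh, x1 - x0⟫ - ⟪f' xh, x - x0⟫ =
      ⟪x - x1, x1 - x0⟫ / η + (⟪A x - A x1, y0 - y1⟫ + (⟪A x, y1⟫ - ⟪A x1, y1⟫)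
        + (- (α * ⟪A x - A x0, ym1 - y0⟫) + α * ⟪A x0 - A x1, y0 - ym1⟫)) := by
    rw [hgrad, hyh]
    simp only [inner_sub_left, inner_sub_right, inner_add_left, inner_add_right,
      real_inner_smul_left, real_inner_smul_right, map_sub, map_add, map_smul,
      ContinuousLinearMap.adjoint_inner_left, smul_sub, smul_add, div_eq_mul_inv]
    simp only [real_inner_comm x1 x0, real_inner_comm x x1, real_inner_comm x x0,
      real_inner_comm (A x) y0, real_inner_comm (A x1) y0, real_inner_comm (A x0) y0,
      real_inner_comm (A x) ym1, real_inner_comm (A x1) ym1, real_inner_comm (A x0) ym1,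
      real_inner_comm (A x) y1, real_inner_comm (A x1) y1]
    ring
  have ic1' : θ * (⟪f' xh, x1 - x0⟫ - ⟪f' xh, x - x0⟫) =
      θ * (⟪x - x1, x1 - x0⟫ / η + (⟪A x - A x1, y0 - y1⟫ + (⟪A x, y1⟫ - ⟪A x1, y1⟫)
        + (- (α * ⟪A x - A x0, ym1 - y0⟫) + α * ⟪A x0 - A x1, y0 - ym1⟫))) := by
    rw [ic1]
  -- dual prox step
  have hD : g y1 - g y ≤ ⟪y - y1, y1 - y0⟫ / τ - (⟪A x1, y⟫ - ⟪A x1, y1⟫)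
      - μg / 2 * ‖y - y1‖ ^ 2 := by
    set b := y0 + τ • A x1 with hb
    set C := ⟪y1 - b, y - y1⟫ + τ * (g y - g y1) - τ * (μg / 2 * ‖y - y1‖ ^ 2) with hC
    set D := ‖y - y1‖ ^ 2 / 2 + τ * (μg / 2 * ‖y - y1‖ ^ 2) with hD
    clear_value C D
    have hD0 : 0 ≤ D := by rw [hD]; positivity
    have h2τ : (0:ℝ) < 2 * τ := by linarith
    have key : ∀ t : ℝ, 0 < t → t ≤ 1 → 0 ≤ C + t * D := by
      intro t ht0 ht1
      have e1 := hy (y1 + t • (y - y1))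
      have hnorm : ‖y1 + t • (y - y1) - b‖ ^ 2
          = ‖y1 - b‖ ^ 2 + 2 * (t * ⟪y1 - b, y - y1⟫) + t ^ 2 * ‖y - y1‖ ^ 2 := by
        have hv : y1 + t • (y - y1) - b = (y1 - b) + t • (y - y1) := by abel
        rw [hv, norm_add_sq_real, real_inner_smul_right, norm_smul, Real.norm_eq_abs,
          mul_pow, sq_abs]
      rw [hnorm] at e1
      have e2 := mul_le_mul_of_nonneg_left e1 h2τ.le
      have hca : ∀ r : ℝ, 2 * τ * (r / (2 * τ)) = r := fun r => by field_simp
      rw [mul_add, mul_add, hca, hca] at e2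
      have hconv := hg.2 (Set.mem_univ y1) (Set.mem_univ y)
        (by linarith : (0:ℝ) ≤ 1 - t) ht0.le (by ring)
      have hcomb : (1 - t) • y1 + t • y = y1 + t • (y - y1) := by module
      rw [hcomb, norm_sub_rev] at hconv
      simp only [smul_eq_mul] at hconv
      have hconv2 := mul_le_mul_of_nonneg_left hconv h2τ.le
      have hq : 0 ≤ (2 * t) * (C + t * D) := by
        rw [hC, hD]; linarith [e2, hconv2]
      have h2t : (0:ℝ) < 2 * t := by linarith
      exact nonneg_of_mul_nonneg_right hq h2t
    have hclaim : 0 ≤ C := by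
      by_contra hcon
      push_neg at hcon
      rcases eq_or_lt_of_le hD0 with hD1 | hD1
      · have := key 1 one_pos le_rfl
        rw [← hD1] at this
        linarith
      · set t0 := min 1 (-C / (2 * D)) with ht0def
        have ht00 : 0 < t0 := lt_min one_pos (div_pos (by linarith) (by linarith))
        have ht01 : t0 ≤ 1 := min_le_left _ _
        have hk := key t0 ht00 ht01
        have h7 : t0 * D ≤ (-C / (2 * D)) * D :=
          mul_le_mul_of_nonneg_right (min_le_right _ _) hD0
        have h8 : (-C / (2 * D)) * D = -C / 2 := by field_simp
        linarith
    have hbv : y1 - b = (y1 - y0) - τ • (A x1) := by rw [hb]; abel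
    have h5 : τ⁻¹ * C = ⟪y - y1, y1 - y0⟫ / τ + (g y - g y1)
        - (⟪A x1, y⟫ - ⟪A x1, y1⟫) - μg / 2 * ‖y - y1‖ ^ 2 := by
      rw [hC, hbv, inner_sub_left, real_inner_smul_left, inner_sub_right,
        real_inner_comm (y1 - y0) (y - y1)]
      field_simp
      simp only [inner_sub_right]
      ring
    have h6 : 0 ≤ τ⁻¹ * C := mul_nonneg (inv_nonneg.mpr hτ.le) hclaim
    rw [h5] at h6
    linarith
  have hD' := mul_le_mul_of_nonneg_left hD hθ0.le
  -- dual averaging step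
  have hEy : g yb' ≤ (1 - θ) * g yb + θ * g y1 := by
    have h := hg.2 (Set.mem_univ yb) (Set.mem_univ y1) hθ2 hθ0.le (by ring)
    rw [← hyb'] at h
    simp only [smul_eq_mul] at h
    have hp : 0 ≤ (1 - θ) * θ * (μg / 2 * ‖yb - y1‖ ^ 2) := by positivity
    linarith
  -- expansions of E0, E1
  have hE0' : E0 = f xb + ⟪A xb, y⟫ - g y - (f x + ⟪A x, yb⟫ - g yb) := by
    rw [hE0, hL, hL]
  have hE1' : E1 = f xb' + ((1 - θ) * ⟪A xb, y⟫ + θ * ⟪A x1, y⟫) - g y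
      - (f x + ((1 - θ) * ⟪A x, yb⟫ + θ * ⟪A x, y1⟫) - g yb') := by
    rw [hE1, hL, hL, hxb', hyb']
    simp only [map_add, map_smul, inner_add_left, inner_add_right,
      real_inner_smul_left, real_inner_smul_right]
    try ring
  rw [hE1', hE0', div_le_iff₀ hθ0]
  linarith [hA, hB, ic1', hD', hEy]
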